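/- Let G be a countably infinite abelian group with Pontryagin dual Ĝ, and let ν be a probability measure on Ĝ. Then there exists a measure-preserving system (X, μ, (T_g)_{g∈G}) and a measurable function f : X → S¹ ∪ {1} of modulus 1 such that for all h ∈ G, the Fourier coefficient ν̂(h) = ∫_Ĝ χ(h) dν(χ) equals ⟨f ∘ T_h, f⟩_{L²(X,μ)}, and ν({trivial character}) = ∫_X f dμ. -/

import Mathlib

open MeasureTheory

noncomputable section RealizeAux

instance : MeasurableSpace Circle :=
  inferInstanceAs (MeasurableSpace (Submonoid.unitSphere ℂ))
instance : BorelSpace Circle :=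
  Subtype.borelSpace ((Submonoid.unitSphere ℂ : Submonoid ℂ) : Set ℂ)
instance : OpensMeasurableSpace (Submonoid.unitSphere ℂ) :=
  inferInstanceAs (OpensMeasurableSpace Circle)

/-- Haar probability measure on the circle. -/
noncomputable def haarC : Measure Circle := Measure.haarMeasure ⊤

instance : haarC.IsMulLeftInvariant := Measure.isMulLeftInvariant_haarMeasure ⊤

instance : IsProbabilityMeasure haarC := by
  constructor
  rw [← TopologicalSpace.PositiveCompacts.coe_top (α := Circle)]
  exact Measure.haarMeasure_self

lemma integral_circle_id : (∫ z : Circle, (z : ℂ) ∂haarC) = 0 := by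
  have h := integral_mul_left_eq_self (μ := haarC) (fun z : Circle => (z : ℂ))
    (Circle.exp Real.pi)
  have hw : ((Circle.exp Real.pi : Circle) : ℂ) = -1 := by
    rw [Circle.coe_exp]
    exact_mod_cast Complex.exp_pi_mul_I
  have : (∫ z : Circle, ((Circle.exp Real.pi * z : Circle) : ℂ) ∂haarC)
      = - ∫ z : Circle, (z : ℂ) ∂haarC := by
    rw [← integral_neg]
    congr 1
    funext z
    rw [Circle.coe_mul, hw]
    ring
  rw [this] at h
  linear_combination -h / 2

end RealizeAux

/-- Every probability measure `ν` on the Pontryagin dual of a countably infinite abelian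
group `G` arises as the correlation measure of a modulus-one function over a measure
preserving `G`-system; moreover `ν {1}` is realized as the mean of that function. -/
theorem measure_on_dual_realized_by_modulus_one_function
    (G : Type) [CommGroup G] [Countable G] [Infinite G]
    [TopologicalSpace G] [DiscreteTopology G]
    [MeasurableSpace (PontryaginDual G)] [BorelSpace (PontryaginDual G)]
    (ν : Measure (PontryaginDual G)) [IsProbabilityMeasure ν] :
    ∃ (X : Type) (_ : MeasurableSpace X) (μ : Measure X) (T : G → X → X) (f : X → ℂ),
      IsProbabilityMeasure μ ∧
      (∀ g : G, MeasurePreserving (T g) μ μ) ∧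
      (∀ g h : G, ∀ x : X, T (g * h) x = T g (T h x)) ∧
      (∀ x : X, T 1 x = x) ∧
      Measurable f ∧
      (∀ x : X, ‖f x‖ = 1) ∧
      (∀ h : G, (∫ χ : PontryaginDual G, (χ h : ℂ) ∂ν) =
        ∫ x, f (T h x) * (starRingEnd ℂ) (f x) ∂μ) ∧
      (((ν {1}).toReal : ℂ) = ∫ x, f x ∂μ) := by
  classical
  -- The system: X = (dual of G) × Circle, skew action, μ = ν × Haar.
  set X : Type := PontryaginDual G × Circle with hX
  set μ : Measure X := ν.prod haarC with hμ
  set T : G → X → X := fun g p => (p.1, p.1 g * p.2) with hT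
  set f : X → ℂ := fun p => if p.1 = 1 then 1 else (p.2 : ℂ) with hf
  have heval : ∀ g : G, Continuous fun χ : PontryaginDual G => χ g := fun g => by
    exact (ContinuousEvalConst.continuous_eval_const (F := C(G, Circle)) g).comp
      (ContinuousMonoidHom.isInducing_toContinuousMap G Circle).continuous
  have hevalC : ∀ g : G, Continuous fun χ : PontryaginDual G => ((χ g : Circle) : ℂ) :=
    fun g => continuous_subtype_val.comp (heval g)
  have hmul : ∀ g : G, Measurable fun p : X => p.1 g * p.2 := fun g =>
    (((heval g).comp continuous_fst).mul continuous_snd).measurable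
  have hTmeas : ∀ g : G, Measurable (T g) := fun g =>
    measurable_fst.prodMk (hmul g)
  have hMP : ∀ g : G, MeasurePreserving (T g) μ μ := by
    intro g
    exact MeasurePreserving.skew_product (g := fun χ x => χ g * x)
      (MeasurePreserving.id ν) (hmul g)
      (Filter.Eventually.of_forall fun χ => MeasureTheory.map_mul_left_eq_self haarC (χ g))
  have hone : MeasurableSet {p : X | p.1 = 1} :=
    measurable_fst (measurableSet_singleton (1 : PontryaginDual G))
  have hfmeas : Measurable f := by
    apply Measurable.ite hone measurable_const
    exact Continuous.measurable (f := fun p : X => ((p.2 : Circle) : ℂ)) (continuous_subtype_val.comp continuous_snd)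
  have hfabs : ∀ x : X, ‖f x‖ = 1 := by
    intro p
    by_cases hp : p.1 = 1 <;> simp [hf, hp, Circle.norm_coe]
  refine ⟨X, inferInstance, μ, T, f, inferInstance, hMP, ?_, ?_, hfmeas, hfabs, ?_, ?_⟩
  · intro g h p
    simp only [hT, map_mul, mul_assoc]
  · intro p
    simp only [hT, map_one, one_mul, Prod.mk.eta]
  · -- correlation
    intro h
    have hpt : ∀ p : X, f (T h p) * (starRingEnd ℂ) (f p) = ((p.1 h : Circle) : ℂ) := by
      rintro ⟨χ, x⟩
      by_cases hχ : χ = 1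
      · subst hχ
        have h1 : ((1 : PontryaginDual G) h : Circle) = 1 := rfl
        simp [hf, hT, h1]
      · simp only [hf, hT, hχ, if_neg, if_false]
        rw [Circle.coe_mul, mul_assoc, Complex.mul_conj]
        simp [Complex.normSq_eq_norm_sq, Circle.norm_coe]
    have : ∫ x, f (T h x) * (starRingEnd ℂ) (f x) ∂μ
        = ∫ p : X, ((p.1 h : Circle) : ℂ) ∂μ := by
      congr 1
      funext p
      exact hpt p
    rw [this]
    have hmap : μ.map Prod.fst = ν := Measure.fst_prod (μ := ν) (ν := haarC)
    rw [← hmap, integral_map measurable_fst.aemeasurable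
      (hevalC h).measurable.aestronglyMeasurable]
  · -- mean
    have hint : Integrable f μ := by
      refine (integrable_const (1 : ℝ)).mono' hfmeas.aestronglyMeasurable ?_
      exact Filter.Eventually.of_forall fun p => by
        rw [hfabs p]
    rw [integral_prod f hint]
    have hinner : ∀ χ : PontryaginDual G,
        (∫ x : Circle, f (χ, x) ∂haarC) = Set.indicator {1} (fun _ => (1 : ℂ)) χ := by
      intro χ
      by_cases hχ : χ = 1
      · simp [hf, hχ]
      · simp [hf, hχ, integral_circle_id]
    have : (∫ χ : PontryaginDual G, ∫ x : Circle, f (χ, x) ∂haarC ∂ν)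
        = ∫ χ : PontryaginDual G, Set.indicator {1} (fun _ => (1 : ℂ)) χ ∂ν := by
      congr 1
      funext χ
      exact hinner χ
    rw [this, integral_indicator_const (1 : ℂ)
      (measurableSet_singleton (1 : PontryaginDual G)), Complex.real_smul, mul_one, measureReal_def]
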